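/- arXiv:1302.4163 — 2 statements merged into one kernel-verified Lean document; each statement's English description precedes it below -/
import Mathlib

section
/- Every lattice L has a congruence-preserving extension K such that every compact congruence of K is principal, that is, Princ K = Conc K. -/
universe u v

/-- A congruence of a lattice: an equivalence relation compatible with join and meet. -/
structure LatticeCon' (L : Type u) [Lattice L] extends Setoid L where
  sup_comp : ∀ {a b c d : L}, r a b → r c d → r (a ⊔ c) (b ⊔ d)
  inf_comp : ∀ {a b c d : L}, r a b → r c d → r (a ⊓ c) (b ⊓ d)

namespace LatticeCon'

variable {L : Type u} [Lattice L]

theorem ext' {c d : LatticeCon' L} (h : ∀ a b, c.r a b ↔ d.r a b) : c = d := by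
  obtain ⟨cs, _, _⟩ := c
  obtain ⟨ds, _, _⟩ := d
  congr 1
  exact Setoid.ext h

/-- Congruences are ordered by inclusion of the underlying relations. -/
instance : PartialOrder (LatticeCon' L) where
  le c d := ∀ ⦃a b : L⦄, c.r a b → d.r a b
  le_refl c a b h := h
  le_trans c d e h1 h2 a b h := h2 (h1 h)
  le_antisymm c d h1 h2 := ext' fun a b => ⟨fun h => h1 h, fun h => h2 h⟩

instance : InfSet (LatticeCon' L) where
  sInf S :=
    { r := fun a b => ∀ c ∈ S, c.r a b
      iseqv := ⟨fun a c _ => c.iseqv.refl a,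
        fun h c hc => c.iseqv.symm (h c hc),
        fun h1 h2 c hc => c.iseqv.trans (h1 c hc) (h2 c hc)⟩
      sup_comp := fun h1 h2 c hc => c.sup_comp (h1 c hc) (h2 c hc)
      inf_comp := fun h1 h2 c hc => c.inf_comp (h1 c hc) (h2 c hc) }

/-- The congruence lattice `Con L`. -/
instance : CompleteLattice (LatticeCon' L) :=
  completeLatticeOfInf _ fun S =>
    ⟨fun c hc _ _ h => h c hc, fun c hc _ _ h d hd => hc hd h⟩

/-- A congruence is principal if it is the smallest congruence collapsing some pair. -/
def IsPrincipal (α : LatticeCon' L) : Prop :=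
  ∃ a b : L, α.r a b ∧ ∀ β : LatticeCon' L, β.r a b → α ≤ β

/-- `Princ L`: the order of principal congruences of `L`. -/
abbrev Princ (L : Type u) [Lattice L] := {α : LatticeCon' L // α.IsPrincipal}

/-- `Conc L`: the compact congruences of `L`. -/
abbrev Conc (L : Type u) [Lattice L] := {α : LatticeCon' L // IsCompactElement α}

end LatticeCon'

/-- The restriction of a congruence of `K` to `L` along a lattice homomorphism
`f : L → K` (for an injective `f`, this is the restriction to the sublattice `f(L)`). -/
def LatticeCon'.restrict {L : Type u} {K : Type v} [Lattice L] [Lattice K]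
    (f : LatticeHom L K) (γ : LatticeCon' K) : LatticeCon' L where
  r a b := γ.r (f a) (f b)
  iseqv := ⟨fun a => γ.iseqv.refl (f a), fun h => γ.iseqv.symm h,
    fun h1 h2 => γ.iseqv.trans h1 h2⟩
  sup_comp {a b c d} h1 h2 := by
    have := γ.sup_comp h1 h2
    rwa [← map_sup, ← map_sup] at this
  inf_comp {a b c d} h1 h2 := by
    have := γ.inf_comp h1 h2
    rwa [← map_inf, ← map_inf] at this

namespace LatticeCon'

variable {M : Type v} [Lattice M]

theorem r_refl (c : LatticeCon' M) (a : M) : c.r a a := c.iseqv.refl a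
theorem r_symm (c : LatticeCon' M) {a b : M} (h : c.r a b) : c.r b a := c.iseqv.symm h
theorem r_trans (c : LatticeCon' M) {a b d : M} (h1 : c.r a b) (h2 : c.r b d) : c.r a d :=
  c.iseqv.trans h1 h2

theorem le_r {c d : LatticeCon' M} (h : c ≤ d) {a b : M} (hr : c.r a b) : d.r a b := h hr

theorem le_def' {c d : LatticeCon' M} : c ≤ d ↔ ∀ ⦃a b : M⦄, c.r a b → d.r a b := Iff.rfl

theorem sInf_r {S : Set (LatticeCon' M)} {a b : M} : (sInf S).r a b ↔ ∀ c ∈ S, c.r a b := Iff.rfl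

/-- The principal congruence generated by a pair. -/
def conPair (a b : M) : LatticeCon' M := sInf {β : LatticeCon' M | β.r a b}

theorem conPair_r (a b : M) : (conPair a b).r a b := fun _ hc => hc

theorem conPair_le {a b : M} {β : LatticeCon' M} (h : β.r a b) : conPair a b ≤ β :=
  fun _ _ h' => h' β h

theorem isPrincipal_conPair (a b : M) : (conPair a b).IsPrincipal :=
  ⟨a, b, conPair_r a b, fun _ h => conPair_le h⟩

theorem IsPrincipal.eq_conPair {γ : LatticeCon' M} (h : γ.IsPrincipal) :
    ∃ a b : M, γ = conPair a b := by
  obtain ⟨a, b, hr, hmin⟩ := h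
  exact ⟨a, b, le_antisymm (hmin _ (conPair_r a b)) (conPair_le hr)⟩

/-- Congruences collapse intervals: if `c` collapses `p ≤ q` then it collapses any
two elements of `[p, q]`. -/
theorem r_of_between (c : LatticeCon' M) {p q a b : M} (h : c.r p q)
    (hpa : p ≤ a) (haq : a ≤ q) (hpb : p ≤ b) (hbq : b ≤ q) : c.r a b := by
  have h1 : c.r (a ⊔ p) (a ⊔ q) := c.sup_comp (c.r_refl a) h
  rw [sup_eq_left.2 hpa, sup_eq_right.2 haq] at h1
  have h2 : c.r (b ⊔ p) (b ⊔ q) := c.sup_comp (c.r_refl b) h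
  rw [sup_eq_left.2 hpb, sup_eq_right.2 hbq] at h2
  exact c.r_trans h1 (c.r_symm h2)

theorem r_inf_sup (c : LatticeCon' M) {x y : M} (h : c.r x y) : c.r (x ⊓ y) (x ⊔ y) := by
  have h1 : c.r (x ⊓ y) (y ⊓ y) := c.inf_comp h (c.r_refl y)
  rw [inf_idem] at h1
  have h2 : c.r (x ⊔ x) (x ⊔ y) := c.sup_comp (c.r_refl x) h
  rw [sup_idem] at h2
  exact c.r_trans h1 (c.r_trans (c.r_symm h) h2)

theorem r_of_inf_sup (c : LatticeCon' M) {x y : M} (h : c.r (x ⊓ y) (x ⊔ y)) : c.r x y :=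
  c.r_of_between h inf_le_left le_sup_left inf_le_right le_sup_right

/-- The bottom congruence is principal provided the lattice is nonempty. -/
theorem isPrincipal_bot [Nonempty M] : (⊥ : LatticeCon' M).IsPrincipal := by
  obtain ⟨a⟩ := ‹Nonempty M›
  exact ⟨a, a, (⊥ : LatticeCon' M).r_refl a, fun β _ => bot_le⟩

/-- Any pair collapsed by a `sSup` is collapsed by the `sSup` of a finite subset. -/
theorem sSup_r_finset {S : Set (LatticeCon' M)} {a b : M} (h : (sSup S).r a b) :
    ∃ T : Finset (LatticeCon' M), ↑T ⊆ S ∧ (sSup (↑T : Set (LatticeCon' M))).r a b := by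
  classical
  set δ : LatticeCon' M :=
    { r := fun x y => ∃ T : Finset (LatticeCon' M),
        ↑T ⊆ S ∧ (sSup (↑T : Set (LatticeCon' M))).r x y
      iseqv := by
        refine ⟨fun x => ⟨∅, by simp, (sSup (↑(∅ : Finset (LatticeCon' M)) : Set (LatticeCon' M))).r_refl x⟩, ?_, ?_⟩
        · rintro x y ⟨T, hT, h⟩
          exact ⟨T, hT, (sSup (↑T : Set (LatticeCon' M))).r_symm h⟩
        · rintro x y z ⟨T1, hT1, h1⟩ ⟨T2, hT2, h2⟩
          refine ⟨T1 ∪ T2, by simp [Finset.coe_union, Set.union_subset_iff, hT1, hT2], ?_⟩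
          have m1 : sSup (↑T1 : Set (LatticeCon' M)) ≤ sSup (↑(T1 ∪ T2) : Set (LatticeCon' M)) :=
            sSup_le_sSup (by simp [Finset.coe_union])
          have m2 : sSup (↑T2 : Set (LatticeCon' M)) ≤ sSup (↑(T1 ∪ T2) : Set (LatticeCon' M)) :=
            sSup_le_sSup (by simp [Finset.coe_union])
          exact (sSup (↑(T1 ∪ T2) : Set (LatticeCon' M))).r_trans (m1 h1) (m2 h2)
      sup_comp := by
        rintro x y z w ⟨T1, hT1, h1⟩ ⟨T2, hT2, h2⟩
        refine ⟨T1 ∪ T2, by simp [Finset.coe_union, Set.union_subset_iff, hT1, hT2], ?_⟩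
        have m1 : sSup (↑T1 : Set (LatticeCon' M)) ≤ sSup (↑(T1 ∪ T2) : Set (LatticeCon' M)) :=
          sSup_le_sSup (by simp [Finset.coe_union])
        have m2 : sSup (↑T2 : Set (LatticeCon' M)) ≤ sSup (↑(T1 ∪ T2) : Set (LatticeCon' M)) :=
          sSup_le_sSup (by simp [Finset.coe_union])
        exact (sSup (↑(T1 ∪ T2) : Set (LatticeCon' M))).sup_comp (m1 h1) (m2 h2)
      inf_comp := by
        rintro x y z w ⟨T1, hT1, h1⟩ ⟨T2, hT2, h2⟩
        refine ⟨T1 ∪ T2, by simp [Finset.coe_union, Set.union_subset_iff, hT1, hT2], ?_⟩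
        have m1 : sSup (↑T1 : Set (LatticeCon' M)) ≤ sSup (↑(T1 ∪ T2) : Set (LatticeCon' M)) :=
          sSup_le_sSup (by simp [Finset.coe_union])
        have m2 : sSup (↑T2 : Set (LatticeCon' M)) ≤ sSup (↑(T1 ∪ T2) : Set (LatticeCon' M)) :=
          sSup_le_sSup (by simp [Finset.coe_union])
        exact (sSup (↑(T1 ∪ T2) : Set (LatticeCon' M))).inf_comp (m1 h1) (m2 h2) }
  have hub : ∀ s ∈ S, s ≤ δ := by
    intro s hs x y hxy
    refine ⟨{s}, by simpa using hs, ?_⟩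
    exact le_sSup (show s ∈ (↑({s} : Finset (LatticeCon' M)) : Set (LatticeCon' M)) by simp) hxy
  exact (sSup_le hub) h

/-- Principal congruences are compact. -/
theorem IsPrincipal.isCompactElement {γ : LatticeCon' M} (h : γ.IsPrincipal) :
    IsCompactElement γ := by
  obtain ⟨a, b, hr, hmin⟩ := h
  rw [CompleteLattice.isCompactElement_iff_exists_le_sSup_of_le_sSup]
  intro S hS
  obtain ⟨T, hT, hTr⟩ := sSup_r_finset (hS hr)
  refine ⟨T, hT, ?_⟩
  rw [Finset.sup_id_eq_sSup]
  exact hmin _ hTr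

/-- A compact congruence is a finite join of principal congruences. -/
theorem isCompact_eq_finsetSup {γ : LatticeCon' M}
    (h : IsCompactElement γ) :
    ∃ T : Finset (LatticeCon' M), (∀ β ∈ T, β.IsPrincipal) ∧ γ = T.sup id := by
  set S : Set (LatticeCon' M) := {β | ∃ x y : M, γ.r x y ∧ β = conPair x y}
  have hle : γ ≤ sSup S := by
    intro x y hxy
    exact le_sSup (show conPair x y ∈ S from ⟨x, y, hxy, rfl⟩) (conPair_r x y)
  obtain ⟨T, hT, hTle⟩ := (CompleteLattice.isCompactElement_iff_exists_le_sSup_of_le_sSup (k := γ)).1 h S hle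
  refine ⟨T, ?_, le_antisymm hTle (Finset.sup_le ?_)⟩
  · intro β hβ
    obtain ⟨x, y, _, rfl⟩ := hT hβ
    exact isPrincipal_conPair x y
  · intro β hβ
    obtain ⟨x, y, hxy, rfl⟩ := hT hβ
    exact conPair_le hxy

end LatticeCon'

namespace BoolTriple

variable {L : Type u} [Lattice L]

/-- The closure operation on triples, whose fixed points are the boolean triples. -/
def cl (t : L × L × L) : L × L × L :=
  ⟨(t.1 ⊔ t.2.1) ⊓ (t.1 ⊔ t.2.2), (t.2.1 ⊔ t.1) ⊓ (t.2.1 ⊔ t.2.2),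
    (t.2.2 ⊔ t.1) ⊓ (t.2.2 ⊔ t.2.1)⟩

theorem le_cl (t : L × L × L) : t ≤ cl t :=
  ⟨le_inf le_sup_left le_sup_left, le_inf le_sup_left le_sup_left,
    le_inf le_sup_left le_sup_left⟩

theorem cl_mono : Monotone (cl : L × L × L → L × L × L) := by
  rintro ⟨x1, x2, x3⟩ ⟨y1, y2, y3⟩ ⟨h1, h2, h3⟩
  exact ⟨inf_le_inf (sup_le_sup h1 h2) (sup_le_sup h1 h3),
    inf_le_inf (sup_le_sup h2 h1) (sup_le_sup h2 h3),
    inf_le_inf (sup_le_sup h3 h1) (sup_le_sup h3 h2)⟩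

theorem cl_cl (t : L × L × L) : cl (cl t) = cl t := by
  obtain ⟨x, y, z⟩ := t
  refine le_antisymm ?_ (le_cl _)
  refine ⟨?_, ?_, ?_⟩
  · exact inf_le_inf (sup_le inf_le_left (inf_le_left.trans (sup_comm y x).le))
      (sup_le inf_le_right (inf_le_left.trans (sup_comm z x).le))
  · exact inf_le_inf (sup_le inf_le_left (inf_le_left.trans (sup_comm x y).le))
      (sup_le inf_le_right (inf_le_right.trans (sup_comm z y).le))
  · exact inf_le_inf (sup_le inf_le_left (inf_le_right.trans (sup_comm x z).le))
      (sup_le inf_le_right (inf_le_right.trans (sup_comm y z).le))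

end BoolTriple

/-- The lattice of boolean triples `M₃⟨L⟩`. -/
def BoolTriple (L : Type u) [Lattice L] : Type u :=
  {t : L × L × L // BoolTriple.cl t = t}

namespace BoolTriple

variable {L : Type u} [Lattice L]

instance instPartialOrderBoolTriple : PartialOrder (BoolTriple L) := Subtype.partialOrder _

theorem le_def {a b : BoolTriple L} : a ≤ b ↔ a.val ≤ b.val := Iff.rfl

theorem cl_inf {a b : L × L × L} (ha : cl a = a) (hb : cl b = b) : cl (a ⊓ b) = a ⊓ b := by
  refine le_antisymm (le_inf ?_ ?_) (le_cl _)
  · exact (cl_mono inf_le_left).trans ha.le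
  · exact (cl_mono inf_le_right).trans hb.le

instance instLatticeBoolTriple : Lattice (BoolTriple L) :=
  { (inferInstance : PartialOrder (BoolTriple L)) with
    inf := fun a b => ⟨a.val ⊓ b.val, cl_inf a.2 b.2⟩
    sup := fun a b => ⟨cl (a.val ⊔ b.val), cl_cl _⟩
    le_sup_left := fun a b => le_def.2 (le_sup_left.trans (le_cl (a.val ⊔ b.val)))
    le_sup_right := fun a b => le_def.2 (le_sup_right.trans (le_cl (a.val ⊔ b.val)))
    sup_le := fun a b c ha hb =>
      le_def.2 ((cl_mono (sup_le (le_def.1 ha) (le_def.1 hb))).trans_eq c.2)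
    inf_le_left := fun a b => le_def.2 (inf_le_left (a := a.val))
    inf_le_right := fun a b => le_def.2 (inf_le_right (a := a.val))
    le_inf := fun a b c ha hb => le_def.2 (le_inf (le_def.1 ha) (le_def.1 hb)) }

@[simp] theorem inf_val (a b : BoolTriple L) : (a ⊓ b).val = a.val ⊓ b.val := rfl
@[simp] theorem sup_val (a b : BoolTriple L) : (a ⊔ b).val = cl (a.val ⊔ b.val) := rfl

theorem isBool_diag (x : L) : cl ((x, x, x) : L × L × L) = (x, x, x) := by
  simp [cl]

/-- The diagonal embedding of `L` into `M₃⟨L⟩`. -/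
def diag : LatticeHom L (BoolTriple L) where
  toFun x := ⟨(x, x, x), isBool_diag x⟩
  map_sup' a b := by
    apply Subtype.ext
    show (a ⊔ b, a ⊔ b, a ⊔ b) = cl ((a, a, a) ⊔ (b, b, b))
    simp [cl, Prod.ext_iff]
  map_inf' a b := rfl

@[simp] theorem diag_val (x : L) : (diag x : BoolTriple L).val = (x, x, x) := rfl

theorem diag_injective : Function.Injective (diag : L → BoolTriple L) := by
  intro a b h
  have := congrArg (fun t : BoolTriple L => t.val.1) h
  simpa using this

theorem diag_le_diag {u v : L} (h : u ≤ v) : (diag u : BoolTriple L) ≤ diag v :=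
  le_def.2 ⟨h, h, h⟩

end BoolTriple

namespace BoolTriple

variable {L : Type u} [Lattice L]

/-- The canonical extension of a congruence of `L` to `M₃⟨L⟩`. -/
def hat (α : LatticeCon' L) : LatticeCon' (BoolTriple L) where
  r a b := α.r a.val.1 b.val.1 ∧ α.r a.val.2.1 b.val.2.1 ∧ α.r a.val.2.2 b.val.2.2
  iseqv := ⟨fun a => ⟨α.r_refl _, α.r_refl _, α.r_refl _⟩,
    fun h => ⟨α.r_symm h.1, α.r_symm h.2.1, α.r_symm h.2.2⟩,
    fun h g => ⟨α.r_trans h.1 g.1, α.r_trans h.2.1 g.2.1, α.r_trans h.2.2 g.2.2⟩⟩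
  sup_comp {a b c d} h g :=
    ⟨α.inf_comp (α.sup_comp (α.sup_comp h.1 g.1) (α.sup_comp h.2.1 g.2.1))
        (α.sup_comp (α.sup_comp h.1 g.1) (α.sup_comp h.2.2 g.2.2)),
      α.inf_comp (α.sup_comp (α.sup_comp h.2.1 g.2.1) (α.sup_comp h.1 g.1))
        (α.sup_comp (α.sup_comp h.2.1 g.2.1) (α.sup_comp h.2.2 g.2.2)),
      α.inf_comp (α.sup_comp (α.sup_comp h.2.2 g.2.2) (α.sup_comp h.1 g.1))
        (α.sup_comp (α.sup_comp h.2.2 g.2.2) (α.sup_comp h.2.1 g.2.1))⟩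
  inf_comp {a b c d} h g :=
    ⟨α.inf_comp h.1 g.1, α.inf_comp h.2.1 g.2.1, α.inf_comp h.2.2 g.2.2⟩

theorem hat_r {α : LatticeCon' L} {a b : BoolTriple L} :
    (hat α).r a b ↔ α.r a.val.1 b.val.1 ∧ α.r a.val.2.1 b.val.2.1 ∧
      α.r a.val.2.2 b.val.2.2 := Iff.rfl

theorem restrict_hat (α : LatticeCon' L) : LatticeCon'.restrict diag (hat α) = α :=
  LatticeCon'.ext' fun a b => ⟨fun h => h.1, fun h => ⟨h, h, h⟩⟩

/- Boolean patterns. -/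
theorem isBool_1 {c d : L} (h : d ≤ c) : cl ((c, d, d) : L × L × L) = (c, d, d) := by
  simp [cl, sup_eq_left.mpr h, sup_eq_right.mpr h, inf_eq_right.mpr h, inf_eq_left.mpr h]

theorem isBool_2 {c d : L} (h : d ≤ c) : cl ((d, c, d) : L × L × L) = (d, c, d) := by
  simp [cl, sup_eq_left.mpr h, sup_eq_right.mpr h, inf_eq_right.mpr h, inf_eq_left.mpr h]

theorem isBool_3 {c d : L} (h : d ≤ c) : cl ((d, d, c) : L × L × L) = (d, d, c) := by
  simp [cl, sup_eq_left.mpr h, sup_eq_right.mpr h, inf_eq_right.mpr h, inf_eq_left.mpr h]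

theorem isBool_meet (s t : L) : cl ((s, t, s ⊓ t) : L × L × L) = (s, t, s ⊓ t) := by
  have h1 : s ⊔ s ⊓ t = s := sup_inf_self
  have h2 : t ⊔ s ⊓ t = t := by rw [inf_comm]; exact sup_inf_self
  have h3 : s ⊓ t ⊔ s = s := by rw [sup_comm]; exact sup_inf_self
  have h4 : s ⊓ t ⊔ t = t := by rw [sup_comm, inf_comm]; exact sup_inf_self
  have h5 : (s ⊔ t) ⊓ s = s := by rw [inf_comm]; exact inf_sup_self
  have h6 : (t ⊔ s) ⊓ t = t := by rw [inf_comm]; exact inf_sup_self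
  simp [cl, h1, h2, h3, h4, h5, h6]

/- The three atoms of the `M₃` of an interval `[u,v]` on the diagonal. -/
def atom1 {u v : L} (h : u ≤ v) : BoolTriple L := ⟨(v, u, u), isBool_1 h⟩
def atom2 {u v : L} (h : u ≤ v) : BoolTriple L := ⟨(u, v, u), isBool_2 h⟩
def atom3 {u v : L} (h : u ≤ v) : BoolTriple L := ⟨(u, u, v), isBool_3 h⟩

variable {u v : L} (h : u ≤ v)

theorem diag_le_atom1 : (diag u : BoolTriple L) ≤ atom1 h := le_def.2 ⟨h, le_rfl, le_rfl⟩
theorem diag_le_atom2 : (diag u : BoolTriple L) ≤ atom2 h := le_def.2 ⟨le_rfl, h, le_rfl⟩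
theorem diag_le_atom3 : (diag u : BoolTriple L) ≤ atom3 h := le_def.2 ⟨le_rfl, le_rfl, h⟩
theorem atom1_le_diag : atom1 h ≤ (diag v : BoolTriple L) := le_def.2 ⟨le_rfl, h, h⟩
theorem atom2_le_diag : atom2 h ≤ (diag v : BoolTriple L) := le_def.2 ⟨h, le_rfl, h⟩
theorem atom3_le_diag : atom3 h ≤ (diag v : BoolTriple L) := le_def.2 ⟨h, h, le_rfl⟩

theorem atom_sup12 : atom1 h ⊔ atom2 h = diag v := by
  apply Subtype.ext
  show cl ((v, u, u) ⊔ (u, v, u)) = (v, v, v)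
  have e : ((v, u, u) : L × L × L) ⊔ (u, v, u) = (v, v, u) := by
    simp [Prod.ext_iff, sup_eq_left.mpr h, sup_eq_right.mpr h]
  rw [e]
  simp [cl, Prod.ext_iff, sup_eq_left.mpr h, sup_eq_right.mpr h, inf_eq_left.mpr h,
    inf_eq_right.mpr h]

theorem atom_sup13 : atom1 h ⊔ atom3 h = diag v := by
  apply Subtype.ext
  show cl ((v, u, u) ⊔ (u, u, v)) = (v, v, v)
  have e : ((v, u, u) : L × L × L) ⊔ (u, u, v) = (v, u, v) := by
    simp [Prod.ext_iff, sup_eq_left.mpr h, sup_eq_right.mpr h]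
  rw [e]
  simp [cl, Prod.ext_iff, sup_eq_left.mpr h, sup_eq_right.mpr h, inf_eq_left.mpr h,
    inf_eq_right.mpr h]

theorem atom_sup23 : atom2 h ⊔ atom3 h = diag v := by
  apply Subtype.ext
  show cl ((u, v, u) ⊔ (u, u, v)) = (v, v, v)
  have e : ((u, v, u) : L × L × L) ⊔ (u, u, v) = (u, v, v) := by
    simp [Prod.ext_iff, sup_eq_left.mpr h, sup_eq_right.mpr h]
  rw [e]
  simp [cl, Prod.ext_iff, sup_eq_left.mpr h, sup_eq_right.mpr h, inf_eq_left.mpr h,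
    inf_eq_right.mpr h]

theorem atom_inf12 : atom1 h ⊓ atom2 h = diag u := by
  apply Subtype.ext
  show ((v, u, u) : L × L × L) ⊓ (u, v, u) = (u, u, u)
  simp [Prod.ext_iff, inf_eq_left.mpr h, inf_eq_right.mpr h]

theorem atom_inf13 : atom1 h ⊓ atom3 h = diag u := by
  apply Subtype.ext
  show ((v, u, u) : L × L × L) ⊓ (u, u, v) = (u, u, u)
  simp [Prod.ext_iff, inf_eq_left.mpr h, inf_eq_right.mpr h]

theorem atom_inf23 : atom2 h ⊓ atom3 h = diag u := by
  apply Subtype.ext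
  show ((u, v, u) : L × L × L) ⊓ (u, u, v) = (u, u, u)
  simp [Prod.ext_iff, inf_eq_left.mpr h, inf_eq_right.mpr h]

variable (Θ : LatticeCon' (BoolTriple L))

/-- In the `M₃` sublattice spanned by an interval of the diagonal, collapsing the
bottom with one atom collapses the whole interval. -/
theorem m3_up1 (h0 : Θ.r (diag u) (atom1 h)) : Θ.r (diag u) (diag v) := by
  have h1 : Θ.r (diag u ⊔ atom2 h) (atom1 h ⊔ atom2 h) := Θ.sup_comp h0 (Θ.r_refl _)
  rw [sup_eq_right.mpr (diag_le_atom2 h), atom_sup12 h] at h1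
  have h2 : Θ.r (atom2 h ⊓ atom3 h) (diag v ⊓ atom3 h) := Θ.inf_comp h1 (Θ.r_refl _)
  rw [atom_inf23 h, inf_eq_right.mpr (atom3_le_diag h)] at h2
  have h3 : Θ.r (diag u ⊔ atom1 h) (atom3 h ⊔ atom1 h) := Θ.sup_comp h2 (Θ.r_refl _)
  rw [sup_eq_right.mpr (diag_le_atom1 h), sup_comm, atom_sup13 h] at h3
  exact Θ.r_trans h0 h3

theorem m3_up2 (h0 : Θ.r (diag u) (atom2 h)) : Θ.r (diag u) (diag v) := by
  have h1 : Θ.r (diag u ⊔ atom1 h) (atom2 h ⊔ atom1 h) := Θ.sup_comp h0 (Θ.r_refl _)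
  rw [sup_eq_right.mpr (diag_le_atom1 h), sup_comm, atom_sup12 h] at h1
  have h2 : Θ.r (atom1 h ⊓ atom3 h) (diag v ⊓ atom3 h) := Θ.inf_comp h1 (Θ.r_refl _)
  rw [atom_inf13 h, inf_eq_right.mpr (atom3_le_diag h)] at h2
  have h3 : Θ.r (diag u ⊔ atom2 h) (atom3 h ⊔ atom2 h) := Θ.sup_comp h2 (Θ.r_refl _)
  rw [sup_eq_right.mpr (diag_le_atom2 h), sup_comm, atom_sup23 h] at h3
  exact Θ.r_trans h0 h3

theorem m3_up3 (h0 : Θ.r (diag u) (atom3 h)) : Θ.r (diag u) (diag v) := by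
  have h1 : Θ.r (diag u ⊔ atom1 h) (atom3 h ⊔ atom1 h) := Θ.sup_comp h0 (Θ.r_refl _)
  rw [sup_eq_right.mpr (diag_le_atom1 h), sup_comm, atom_sup13 h] at h1
  have h2 : Θ.r (atom1 h ⊓ atom2 h) (diag v ⊓ atom2 h) := Θ.inf_comp h1 (Θ.r_refl _)
  rw [atom_inf12 h, inf_eq_right.mpr (atom2_le_diag h)] at h2
  exact m3_up2 h Θ h2

end BoolTriple

namespace BoolTriple

variable {L : Type u} [Lattice L]

variable (Θ : LatticeCon' (BoolTriple L))

/-- Extraction, comparable case: a collapsed comparable pair collapses the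
diagonal pairs of its coordinates. -/
theorem diag_r_of_r_le {x y : BoolTriple L} (hle : x ≤ y) (hr : Θ.r x y) :
    Θ.r (diag x.val.1) (diag y.val.1) ∧ Θ.r (diag x.val.2.1) (diag y.val.2.1) ∧
      Θ.r (diag x.val.2.2) (diag y.val.2.2) := by
  obtain ⟨⟨x1, x2, x3⟩, hx⟩ := x
  obtain ⟨⟨y1, y2, y3⟩, hy⟩ := y
  obtain ⟨h1, h2, h3⟩ := le_def.1 hle
  replace h1 : x1 ≤ y1 := h1
  replace h2 : x2 ≤ y2 := h2
  replace h3 : x3 ≤ y3 := h3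
  set m : L := x1 ⊓ x2 ⊓ x3 with hm
  have hm1 : m ≤ x1 := inf_le_left.trans inf_le_left
  have hm2 : m ≤ x2 := inf_le_left.trans inf_le_right
  have hm3 : m ≤ x3 := inf_le_right
  refine ⟨?_, ?_, ?_⟩
  · -- coordinate 1
    set g : BoolTriple L := ⟨(y1, m, m), isBool_1 (hm1.trans h1)⟩ with hg
    have s1 : Θ.r (⟨(x1, x2, x3), hx⟩ ⊓ g) (⟨(y1, y2, y3), hy⟩ ⊓ g) :=
      Θ.inf_comp hr (Θ.r_refl g)
    have e1 : (⟨(x1, x2, x3), hx⟩ ⊓ g : BoolTriple L) = ⟨(x1, m, m), isBool_1 hm1⟩ := by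
      apply Subtype.ext
      show ((x1, x2, x3) : L × L × L) ⊓ (y1, m, m) = (x1, m, m)
      simp [Prod.ext_iff, inf_eq_left.mpr h1, inf_eq_right.mpr hm2, inf_eq_right.mpr hm3]
    have e2 : (⟨(y1, y2, y3), hy⟩ ⊓ g : BoolTriple L) = g := by
      apply inf_eq_right.mpr
      exact le_def.2 ⟨le_rfl, hm2.trans h2, hm3.trans h3⟩
    rw [e1, e2] at s1
    have s2 : Θ.r (⟨(x1, m, m), isBool_1 hm1⟩ ⊔ diag x1) (g ⊔ diag x1) :=
      Θ.sup_comp s1 (Θ.r_refl (diag x1))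
    have e3 : (⟨(x1, m, m), isBool_1 hm1⟩ ⊔ diag x1 : BoolTriple L) = diag x1 :=
      sup_eq_right.mpr (le_def.2 ⟨le_rfl, hm1, hm1⟩)
    have e4 : (g ⊔ diag x1 : BoolTriple L) = atom1 h1 := by
      apply Subtype.ext
      show cl ((y1, m, m) ⊔ (x1, x1, x1)) = (y1, x1, x1)
      have e : ((y1, m, m) : L × L × L) ⊔ (x1, x1, x1) = (y1, x1, x1) := by
        simp [Prod.ext_iff, sup_eq_left.mpr h1, sup_eq_right.mpr hm1]
      rw [e]
      exact isBool_1 h1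
    rw [e3, e4] at s2
    exact m3_up1 h1 Θ s2
  · -- coordinate 2
    set g : BoolTriple L := ⟨(m, y2, m), isBool_2 (hm2.trans h2)⟩ with hg
    have s1 : Θ.r (⟨(x1, x2, x3), hx⟩ ⊓ g) (⟨(y1, y2, y3), hy⟩ ⊓ g) :=
      Θ.inf_comp hr (Θ.r_refl g)
    have e1 : (⟨(x1, x2, x3), hx⟩ ⊓ g : BoolTriple L) = ⟨(m, x2, m), isBool_2 hm2⟩ := by
      apply Subtype.ext
      show ((x1, x2, x3) : L × L × L) ⊓ (m, y2, m) = (m, x2, m)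
      simp [Prod.ext_iff, inf_eq_left.mpr h2, inf_eq_right.mpr hm1, inf_eq_right.mpr hm3]
    have e2 : (⟨(y1, y2, y3), hy⟩ ⊓ g : BoolTriple L) = g := by
      apply inf_eq_right.mpr
      exact le_def.2 ⟨hm1.trans h1, le_rfl, hm3.trans h3⟩
    rw [e1, e2] at s1
    have s2 : Θ.r (⟨(m, x2, m), isBool_2 hm2⟩ ⊔ diag x2) (g ⊔ diag x2) :=
      Θ.sup_comp s1 (Θ.r_refl (diag x2))
    have e3 : (⟨(m, x2, m), isBool_2 hm2⟩ ⊔ diag x2 : BoolTriple L) = diag x2 :=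
      sup_eq_right.mpr (le_def.2 ⟨hm2, le_rfl, hm2⟩)
    have e4 : (g ⊔ diag x2 : BoolTriple L) = atom2 h2 := by
      apply Subtype.ext
      show cl ((m, y2, m) ⊔ (x2, x2, x2)) = (x2, y2, x2)
      have e : ((m, y2, m) : L × L × L) ⊔ (x2, x2, x2) = (x2, y2, x2) := by
        simp [Prod.ext_iff, sup_eq_left.mpr h2, sup_eq_right.mpr hm2]
      rw [e]
      exact isBool_2 h2
    rw [e3, e4] at s2
    exact m3_up2 h2 Θ s2
  · -- coordinate 3
    set g : BoolTriple L := ⟨(m, m, y3), isBool_3 (hm3.trans h3)⟩ with hg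
    have s1 : Θ.r (⟨(x1, x2, x3), hx⟩ ⊓ g) (⟨(y1, y2, y3), hy⟩ ⊓ g) :=
      Θ.inf_comp hr (Θ.r_refl g)
    have e1 : (⟨(x1, x2, x3), hx⟩ ⊓ g : BoolTriple L) = ⟨(m, m, x3), isBool_3 hm3⟩ := by
      apply Subtype.ext
      show ((x1, x2, x3) : L × L × L) ⊓ (m, m, y3) = (m, m, x3)
      simp [Prod.ext_iff, inf_eq_left.mpr h3, inf_eq_right.mpr hm1, inf_eq_right.mpr hm2]
    have e2 : (⟨(y1, y2, y3), hy⟩ ⊓ g : BoolTriple L) = g := by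
      apply inf_eq_right.mpr
      exact le_def.2 ⟨hm1.trans h1, hm2.trans h2, le_rfl⟩
    rw [e1, e2] at s1
    have s2 : Θ.r (⟨(m, m, x3), isBool_3 hm3⟩ ⊔ diag x3) (g ⊔ diag x3) :=
      Θ.sup_comp s1 (Θ.r_refl (diag x3))
    have e3 : (⟨(m, m, x3), isBool_3 hm3⟩ ⊔ diag x3 : BoolTriple L) = diag x3 :=
      sup_eq_right.mpr (le_def.2 ⟨hm3, hm3, le_rfl⟩)
    have e4 : (g ⊔ diag x3 : BoolTriple L) = atom3 h3 := by
      apply Subtype.ext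
      show cl ((m, m, y3) ⊔ (x3, x3, x3)) = (x3, x3, y3)
      have e : ((m, m, y3) : L × L × L) ⊔ (x3, x3, x3) = (x3, x3, y3) := by
        simp [Prod.ext_iff, sup_eq_left.mpr h3, sup_eq_right.mpr hm3]
      rw [e]
      exact isBool_3 h3
    rw [e3, e4] at s2
    exact m3_up3 h3 Θ s2

/-- Extraction, general case. -/
theorem diag_r_of_r {x y : BoolTriple L} (hr : Θ.r x y) :
    Θ.r (diag x.val.1) (diag y.val.1) ∧ Θ.r (diag x.val.2.1) (diag y.val.2.1) ∧
      Θ.r (diag x.val.2.2) (diag y.val.2.2) := by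
  have hzw := Θ.r_inf_sup hr
  have hle : x ⊓ y ≤ x ⊔ y := inf_le_left.trans le_sup_left
  obtain ⟨d1, d2, d3⟩ := diag_r_of_r_le Θ hle hzw
  have hx : x ≤ x ⊔ y := le_sup_left
  have hy : y ≤ x ⊔ y := le_sup_right
  refine ⟨?_, ?_, ?_⟩
  · exact Θ.r_of_between d1 (diag_le_diag inf_le_left) (diag_le_diag (le_def.1 hx).1)
      (diag_le_diag inf_le_right) (diag_le_diag (le_def.1 hy).1)
  · exact Θ.r_of_between d2 (diag_le_diag inf_le_left) (diag_le_diag (le_def.1 hx).2.1)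
      (diag_le_diag inf_le_right) (diag_le_diag (le_def.1 hy).2.1)
  · exact Θ.r_of_between d3 (diag_le_diag inf_le_left) (diag_le_diag (le_def.1 hx).2.2)
      (diag_le_diag inf_le_right) (diag_le_diag (le_def.1 hy).2.2)

end BoolTriple

namespace BoolTriple

variable {L : Type u} [Lattice L]

variable (Θ : LatticeCon' (BoolTriple L))

/-- Converse direction, comparable case. -/
theorem r_of_diag_le {z w : BoolTriple L} (hle : z ≤ w)
    (h1 : Θ.r (diag z.val.1) (diag w.val.1))
    (h2 : Θ.r (diag z.val.2.1) (diag w.val.2.1))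
    (h3 : Θ.r (diag z.val.2.2) (diag w.val.2.2)) : Θ.r z w := by
  obtain ⟨⟨z1, z2, z3⟩, hz⟩ := z
  obtain ⟨⟨w1, w2, w3⟩, hw⟩ := w
  obtain ⟨l1, l2, l3⟩ := le_def.1 hle
  replace l1 : z1 ≤ w1 := l1
  replace l2 : z2 ≤ w2 := l2
  replace l3 : z3 ≤ w3 := l3
  replace h1 : Θ.r (diag z1) (diag w1) := h1
  replace h2 : Θ.r (diag z2) (diag w2) := h2
  replace h3 : Θ.r (diag z3) (diag w3) := h3
  set m : L := z1 ⊓ z2 ⊓ z3 with hmdef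
  have hm1 : m ≤ z1 := inf_le_left.trans inf_le_left
  have hm2 : m ≤ z2 := inf_le_left.trans inf_le_right
  have hm3 : m ≤ z3 := inf_le_right
  have raise : ∀ p t' t : BoolTriple L, Θ.r t' t → t' ≤ p → Θ.r p (p ⊔ t) := by
    intro p t' t hrel hle'
    have := Θ.sup_comp (Θ.r_refl p) hrel
    rwa [sup_eq_left.mpr hle'] at this
  set Z : BoolTriple L := ⟨(z1, z2, z3), hz⟩ with hZ
  set W : BoolTriple L := ⟨(w1, w2, w3), hw⟩ with hW
  set t1 : BoolTriple L := ⟨(w1, m, m), isBool_1 (hm1.trans l1)⟩ with ht1def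
  set t2 : BoolTriple L := ⟨(m, w2, m), isBool_2 (hm2.trans l2)⟩ with ht2def
  set t3 : BoolTriple L := ⟨(m, m, w3), isBool_3 (hm3.trans l3)⟩ with ht3def
  have ht1 : Θ.r (⟨(z1, m, m), isBool_1 hm1⟩ : BoolTriple L) t1 := by
    have hc := Θ.inf_comp h1 (Θ.r_refl t1)
    have e1 : (diag z1 ⊓ t1 : BoolTriple L) = ⟨(z1, m, m), isBool_1 hm1⟩ := by
      apply Subtype.ext
      show ((z1, z1, z1) : L × L × L) ⊓ (w1, m, m) = (z1, m, m)
      simp [Prod.ext_iff, inf_eq_left.mpr l1, inf_eq_right.mpr hm1]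
    have e2 : (diag w1 ⊓ t1 : BoolTriple L) = t1 :=
      inf_eq_right.mpr (le_def.2 ⟨le_rfl, hm1.trans l1, hm1.trans l1⟩)
    rwa [e1, e2] at hc
  have ht2 : Θ.r (⟨(m, z2, m), isBool_2 hm2⟩ : BoolTriple L) t2 := by
    have hc := Θ.inf_comp h2 (Θ.r_refl t2)
    have e1 : (diag z2 ⊓ t2 : BoolTriple L) = ⟨(m, z2, m), isBool_2 hm2⟩ := by
      apply Subtype.ext
      show ((z2, z2, z2) : L × L × L) ⊓ (m, w2, m) = (m, z2, m)
      simp [Prod.ext_iff, inf_eq_left.mpr l2, inf_eq_right.mpr hm2]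
    have e2 : (diag w2 ⊓ t2 : BoolTriple L) = t2 :=
      inf_eq_right.mpr (le_def.2 ⟨hm2.trans l2, le_rfl, hm2.trans l2⟩)
    rwa [e1, e2] at hc
  have ht3 : Θ.r (⟨(m, m, z3), isBool_3 hm3⟩ : BoolTriple L) t3 := by
    have hc := Θ.inf_comp h3 (Θ.r_refl t3)
    have e1 : (diag z3 ⊓ t3 : BoolTriple L) = ⟨(m, m, z3), isBool_3 hm3⟩ := by
      apply Subtype.ext
      show ((z3, z3, z3) : L × L × L) ⊓ (m, m, w3) = (m, m, z3)
      simp [Prod.ext_iff, inf_eq_left.mpr l3, inf_eq_right.mpr hm3]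
    have e2 : (diag w3 ⊓ t3 : BoolTriple L) = t3 :=
      inf_eq_right.mpr (le_def.2 ⟨hm3.trans l3, hm3.trans l3, le_rfl⟩)
    rwa [e1, e2] at hc
  have s1 : Θ.r Z (Z ⊔ t1) := raise Z _ t1 ht1 (le_def.2 ⟨le_rfl, hm2, hm3⟩)
  have s2 : Θ.r (Z ⊔ t1) ((Z ⊔ t1) ⊔ t2) :=
    raise (Z ⊔ t1) _ t2 ht2 ((le_def.2 ⟨hm1, le_rfl, hm3⟩ :
      (⟨(m, z2, m), isBool_2 hm2⟩ : BoolTriple L) ≤ Z).trans le_sup_left)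
  have s3 : Θ.r ((Z ⊔ t1) ⊔ t2) (((Z ⊔ t1) ⊔ t2) ⊔ t3) :=
    raise ((Z ⊔ t1) ⊔ t2) _ t3 ht3 ((le_def.2 ⟨hm1, hm2, le_rfl⟩ :
      (⟨(m, m, z3), isBool_3 hm3⟩ : BoolTriple L) ≤ Z).trans
      (le_sup_left.trans le_sup_left))
  have hfin : ((Z ⊔ t1) ⊔ t2) ⊔ t3 = W := by
    apply le_antisymm
    · refine sup_le (sup_le (sup_le hle ?_) ?_) ?_
      · exact le_def.2 ⟨le_rfl, hm2.trans l2, hm3.trans l3⟩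
      · exact le_def.2 ⟨hm1.trans l1, le_rfl, hm3.trans l3⟩
      · exact le_def.2 ⟨hm1.trans l1, hm2.trans l2, le_rfl⟩
    · have q1 : t1 ≤ ((Z ⊔ t1) ⊔ t2) ⊔ t3 :=
        (le_sup_right.trans le_sup_left).trans le_sup_left
      have q2 : t2 ≤ ((Z ⊔ t1) ⊔ t2) ⊔ t3 := le_sup_right.trans le_sup_left
      have q3 : t3 ≤ ((Z ⊔ t1) ⊔ t2) ⊔ t3 := le_sup_right
      exact le_def.2 ⟨(le_def.1 q1).1, (le_def.1 q2).2.1, (le_def.1 q3).2.2⟩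
  rw [hfin] at s3
  exact Θ.r_trans (Θ.r_trans s1 s2) s3

/-- Converse direction, general case. -/
theorem r_of_diag {x y : BoolTriple L}
    (h1 : Θ.r (diag x.val.1) (diag y.val.1))
    (h2 : Θ.r (diag x.val.2.1) (diag y.val.2.1))
    (h3 : Θ.r (diag x.val.2.2) (diag y.val.2.2)) : Θ.r x y := by
  set β := LatticeCon'.restrict (diag : LatticeHom L (BoolTriple L)) Θ with hβ
  obtain ⟨⟨x1, x2, x3⟩, hx⟩ := x
  obtain ⟨⟨y1, y2, y3⟩, hy⟩ := y
  replace h1 : β.r x1 y1 := h1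
  replace h2 : β.r x2 y2 := h2
  replace h3 : β.r x3 y3 := h3
  have hy' := Prod.ext_iff.mp hy
  have hy1 : (y1 ⊔ y2) ⊓ (y1 ⊔ y3) = y1 := hy'.1
  have hy2 : (y2 ⊔ y1) ⊓ (y2 ⊔ y3) = y2 := (Prod.ext_iff.mp hy'.2).1
  have hy3 : (y3 ⊔ y1) ⊓ (y3 ⊔ y2) = y3 := (Prod.ext_iff.mp hy'.2).2
  have c1 : β.r (x1 ⊔ y1) y1 := by
    have := β.sup_comp h1 (β.r_refl y1); rwa [sup_idem] at this
  have c2 : β.r (x2 ⊔ y2) y2 := by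
    have := β.sup_comp h2 (β.r_refl y2); rwa [sup_idem] at this
  have c3 : β.r (x3 ⊔ y3) y3 := by
    have := β.sup_comp h3 (β.r_refl y3); rwa [sup_idem] at this
  have gz1 : β.r (x1 ⊓ y1) y1 := by
    have := β.inf_comp h1 (β.r_refl y1); rwa [inf_idem] at this
  have gz2 : β.r (x2 ⊓ y2) y2 := by
    have := β.inf_comp h2 (β.r_refl y2); rwa [inf_idem] at this
  have gz3 : β.r (x3 ⊓ y3) y3 := by
    have := β.inf_comp h3 (β.r_refl y3); rwa [inf_idem] at this
  have gw1 : β.r (((x1 ⊔ y1) ⊔ (x2 ⊔ y2)) ⊓ ((x1 ⊔ y1) ⊔ (x3 ⊔ y3))) y1 := by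
    have := β.inf_comp (β.sup_comp c1 c2) (β.sup_comp c1 c3)
    rwa [hy1] at this
  have gw2 : β.r (((x2 ⊔ y2) ⊔ (x1 ⊔ y1)) ⊓ ((x2 ⊔ y2) ⊔ (x3 ⊔ y3))) y2 := by
    have := β.inf_comp (β.sup_comp c2 c1) (β.sup_comp c2 c3)
    rwa [hy2] at this
  have gw3 : β.r (((x3 ⊔ y3) ⊔ (x1 ⊔ y1)) ⊓ ((x3 ⊔ y3) ⊔ (x2 ⊔ y2))) y3 := by
    have := β.inf_comp (β.sup_comp c3 c1) (β.sup_comp c3 c2)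
    rwa [hy3] at this
  have d1 := β.r_trans gz1 (β.r_symm gw1)
  have d2 := β.r_trans gz2 (β.r_symm gw2)
  have d3 := β.r_trans gz3 (β.r_symm gw3)
  have hzw : Θ.r ((⟨(x1, x2, x3), hx⟩ : BoolTriple L) ⊓ ⟨(y1, y2, y3), hy⟩)
      ((⟨(x1, x2, x3), hx⟩ : BoolTriple L) ⊔ ⟨(y1, y2, y3), hy⟩) :=
    r_of_diag_le Θ (inf_le_left.trans le_sup_left) d1 d2 d3
  exact Θ.r_of_between hzw inf_le_left le_sup_left inf_le_right le_sup_right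

/-- `M₃⟨L⟩` is a congruence-preserving extension of (the diagonal copy of) `L`. -/
theorem conPreserving (α : LatticeCon' L) :
    ∃! Θ : LatticeCon' (BoolTriple L),
      LatticeCon'.restrict (diag : LatticeHom L (BoolTriple L)) Θ = α := by
  refine ⟨hat α, restrict_hat α, ?_⟩
  intro Θ hΘ
  subst hΘ
  apply LatticeCon'.ext'
  intro a b
  constructor
  · intro h
    obtain ⟨d1, d2, d3⟩ := diag_r_of_r Θ h
    exact ⟨d1, d2, d3⟩
  · intro h
    exact r_of_diag Θ h.1 h.2.1 h.2.2

/- The gadget pair whose principal congruence is the join of the principal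
congruences of `(a,b)` and `(c,d)`. -/
def gU (a b c d : L) : BoolTriple L := ⟨(a ⊓ b, c ⊓ d, (a ⊓ b) ⊓ (c ⊓ d)), isBool_meet _ _⟩
def gV (a b c d : L) : BoolTriple L := ⟨(a ⊔ b, c ⊔ d, (a ⊔ b) ⊓ (c ⊔ d)), isBool_meet _ _⟩

theorem gadget_iff (a b c d : L) :
    Θ.r (gU a b c d) (gV a b c d) ↔
      Θ.r (diag a) (diag b) ∧ Θ.r (diag c) (diag d) := by
  set β := LatticeCon'.restrict (diag : LatticeHom L (BoolTriple L)) Θ with hβ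
  constructor
  · intro h
    obtain ⟨d1, d2, _⟩ := diag_r_of_r Θ h
    exact ⟨β.r_of_inf_sup d1, β.r_of_inf_sup d2⟩
  · rintro ⟨h1, h2⟩
    have c1 : β.r (a ⊓ b) (a ⊔ b) := β.r_inf_sup h1
    have c2 : β.r (c ⊓ d) (c ⊔ d) := β.r_inf_sup h2
    have c3 := β.inf_comp c1 c2
    exact r_of_diag Θ c1 c2 c3

end BoolTriple

namespace Tower

variable (L : Type u) [Lattice L]

/-- The tower `L, M₃⟨L⟩, M₃⟨M₃⟨L⟩⟩, …` as a sequence of bundled lattices. -/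
def TL : ℕ → (A : Type u) × Lattice A
  | 0 => ⟨L, ‹Lattice L›⟩
  | n + 1 => ⟨@BoolTriple (TL n).1 (TL n).2, @BoolTriple.instLatticeBoolTriple (TL n).1 (TL n).2⟩

def T (n : ℕ) : Type u := (TL L n).1

instance instTLattice (n : ℕ) : Lattice (T L n) := (TL L n).2

instance instTLattice' (n : ℕ) : Lattice (TL L n).1 := (TL L n).2

/-- The diagonal embedding at each level. -/
def em (n : ℕ) : LatticeHom (T L n) (T L (n + 1)) :=
  (BoolTriple.diag : LatticeHom (T L n) (BoolTriple (T L n)))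

theorem em_injective (n : ℕ) : Function.Injective (em L n) := fun a b hab =>
  BoolTriple.diag_injective hab

/-- Transition maps of the tower. -/
def tr {m n : ℕ} (h : m ≤ n) : T L m → T L n :=
  Nat.leRecOn h fun {k} x => em L k x

theorem tr_self {n : ℕ} (h : n ≤ n) (x : T L n) : tr L h x = x := Nat.leRecOn_self x

theorem tr_succ_last {m n : ℕ} (h : m ≤ n) (h2 : m ≤ n + 1) (x : T L m) :
    tr L h2 x = em L n (tr L h x) := Nat.leRecOn_succ h x

theorem tr_succ_self {n : ℕ} (x : T L n) : tr L (Nat.le_succ n) x = em L n x :=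
  Nat.leRecOn_succ' x

theorem tr_trans' {m n k : ℕ} (h1 : m ≤ n) (h2 : n ≤ k) (x : T L m) :
    tr L (h1.trans h2) x = tr L h2 (tr L h1 x) := Nat.leRecOn_trans h1 h2 x

theorem tr_injective {m n : ℕ} (h : m ≤ n) : Function.Injective (tr L h) :=
  Nat.leRecOn_injective h _ fun k => em_injective L k

theorem tr_sup {m n : ℕ} (h : m ≤ n) (x y : T L m) :
    tr L h (x ⊔ y) = tr L h x ⊔ tr L h y := by
  induction n, h using Nat.le_induction with
  | base => rw [tr_self, tr_self, tr_self]
  | succ n h ih =>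
    rw [tr_succ_last L h, tr_succ_last L h, tr_succ_last L h, ih, map_sup]

theorem tr_inf {m n : ℕ} (h : m ≤ n) (x y : T L m) :
    tr L h (x ⊓ y) = tr L h x ⊓ tr L h y := by
  induction n, h using Nat.le_induction with
  | base => rw [tr_self, tr_self, tr_self]
  | succ n h ih =>
    rw [tr_succ_last L h, tr_succ_last L h, tr_succ_last L h, ih, map_inf]

theorem tr_le_tr_iff {m n : ℕ} (h : m ≤ n) {x y : T L m} :
    tr L h x ≤ tr L h y ↔ x ≤ y := by
  constructor
  · intro hle
    have : tr L h (x ⊓ y) = tr L h x := by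
      rw [tr_inf]
      exact inf_eq_left.mpr hle
    exact inf_eq_left.mp (tr_injective L h this)
  · intro hle
    have : tr L h (x ⊓ y) = tr L h x := by rw [inf_eq_left.mpr hle]
    rw [tr_inf] at this
    exact inf_eq_left.mp this

/-- Transporting an agreement between levels. -/
theorem tr_eq_of_eq {m n k k' : ℕ} {x : T L m} {y : T L n} {hmk : m ≤ k} {hnk : n ≤ k}
    (hmk' : m ≤ k') (hnk' : n ≤ k') (h : tr L hmk x = tr L hnk y) :
    tr L hmk' x = tr L hnk' y := by
  have hkK : k ≤ max k k' := le_max_left k k'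
  have hk'K : k' ≤ max k k' := le_max_right k k'
  have h1 : tr L (hmk.trans hkK) x = tr L (hnk.trans hkK) y := by
    rw [tr_trans' L hmk hkK, tr_trans' L hnk hkK, h]
  have h2 : tr L hk'K (tr L hmk' x) = tr L hk'K (tr L hnk' y) := by
    rw [← tr_trans' L hmk' hk'K, ← tr_trans' L hnk' hk'K]
    exact h1
  exact tr_injective L hk'K h2

theorem tr_le_of_le {m n k k' : ℕ} {x : T L m} {y : T L n} {hmk : m ≤ k} {hnk : n ≤ k}
    (hmk' : m ≤ k') (hnk' : n ≤ k') (h : tr L hmk x ≤ tr L hnk y) :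
    tr L hmk' x ≤ tr L hnk' y := by
  have hkK : k ≤ max k k' := le_max_left k k'
  have hk'K : k' ≤ max k k' := le_max_right k k'
  have h1 : tr L (hmk.trans hkK) x ≤ tr L (hnk.trans hkK) y := by
    rw [tr_trans' L hmk hkK, tr_trans' L hnk hkK]
    exact (tr_le_tr_iff L hkK).mpr h
  have h2 : tr L hk'K (tr L hmk' x) ≤ tr L hk'K (tr L hnk' y) := by
    rw [← tr_trans' L hmk' hk'K, ← tr_trans' L hnk' hk'K]
    exact h1
  exact (tr_le_tr_iff L hk'K).mp h2

/-- The colimit setoid. -/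
def sd : Setoid (Σ n, T L n) where
  r a b := tr L (le_max_left a.1 b.1) a.2 = tr L (le_max_right a.1 b.1) b.2
  iseqv := by
    refine ⟨fun a => rfl, fun {a b} h => ?_, fun {a b c} h1 h2 => ?_⟩
    · exact (tr_eq_of_eq L _ _ h).symm
    · set K := max (max a.1 b.1) c.1 with hK
      have ha : a.1 ≤ K := (le_max_left a.1 b.1).trans (le_max_left _ _)
      have hb : b.1 ≤ K := (le_max_right a.1 b.1).trans (le_max_left _ _)
      have hc : c.1 ≤ K := le_max_right _ _
      have e1 : tr L ha a.2 = tr L hb b.2 := tr_eq_of_eq L ha hb h1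
      have e2 : tr L hb b.2 = tr L hc c.2 := tr_eq_of_eq L hb hc h2
      exact tr_eq_of_eq L _ _ (e1.trans e2)

/-- The colimit `K_ω` of the tower. -/
def KT : Type u := Quotient (sd L)

def mk (n : ℕ) (x : T L n) : KT L := Quotient.mk (sd L) ⟨n, x⟩

theorem mk_eq_mk {n k : ℕ} (h : n ≤ k) (x : T L n) : mk L n x = mk L k (tr L h x) := by
  apply Quotient.sound
  show tr L _ x = tr L _ (tr L h x)
  rw [← tr_trans' L h (le_max_right n k)]

theorem mk_inj {n : ℕ} {x y : T L n} (h : mk L n x = mk L n y) : x = y := by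
  have h' := Quotient.exact h
  exact tr_injective L (le_max_left n n) h' 

theorem exists_rep (q : KT L) : ∃ n x, q = mk L n x := by
  obtain ⟨⟨n, x⟩, rfl⟩ := Quotient.exists_rep q
  exact ⟨n, x, rfl⟩

theorem exists_rep₂ (q₁ q₂ : KT L) : ∃ n x y, q₁ = mk L n x ∧ q₂ = mk L n y := by
  obtain ⟨n₁, x₁, rfl⟩ := exists_rep L q₁
  obtain ⟨n₂, x₂, rfl⟩ := exists_rep L q₂
  exact ⟨max n₁ n₂, tr L (le_max_left n₁ n₂) x₁, tr L (le_max_right n₁ n₂) x₂,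
    mk_eq_mk L _ _, mk_eq_mk L _ _⟩

theorem exists_rep₃ (q₁ q₂ q₃ : KT L) :
    ∃ n x y z, q₁ = mk L n x ∧ q₂ = mk L n y ∧ q₃ = mk L n z := by
  obtain ⟨n, x, y, rfl, rfl⟩ := exists_rep₂ L q₁ q₂
  obtain ⟨m, z, rfl⟩ := exists_rep L q₃
  refine ⟨max n m, tr L (le_max_left n m) x, tr L (le_max_left n m) y,
    tr L (le_max_right n m) z, mk_eq_mk L _ _, mk_eq_mk L _ _, mk_eq_mk L _ _⟩

theorem exists_rep₄ (q₁ q₂ q₃ q₄ : KT L) :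
    ∃ n x y z w, q₁ = mk L n x ∧ q₂ = mk L n y ∧ q₃ = mk L n z ∧ q₄ = mk L n w := by
  obtain ⟨n, x, y, z, rfl, rfl, rfl⟩ := exists_rep₃ L q₁ q₂ q₃
  obtain ⟨m, w, rfl⟩ := exists_rep L q₄
  refine ⟨max n m, tr L (le_max_left n m) x, tr L (le_max_left n m) y,
    tr L (le_max_left n m) z, tr L (le_max_right n m) w,
    mk_eq_mk L _ _, mk_eq_mk L _ _, mk_eq_mk L _ _, mk_eq_mk L _ _⟩

end Tower

namespace Tower

variable (L : Type u) [Lattice L]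

theorem le_transfer {a₁ b₁ a₂ b₂ : Σ n, T L n} (ha : (sd L).r a₁ a₂) (hb : (sd L).r b₁ b₂)
    (h : tr L (le_max_left a₁.1 b₁.1) a₁.2 ≤ tr L (le_max_right a₁.1 b₁.1) b₁.2) :
    tr L (le_max_left a₂.1 b₂.1) a₂.2 ≤ tr L (le_max_right a₂.1 b₂.1) b₂.2 := by
  set K := max (max a₁.1 b₁.1) (max a₂.1 b₂.1) with hK
  have g1 : a₁.1 ≤ K := (le_max_left _ _).trans (le_max_left _ _)
  have g2 : b₁.1 ≤ K := (le_max_right _ _).trans (le_max_left _ _)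
  have g3 : a₂.1 ≤ K := (le_max_left _ _).trans (le_max_right _ _)
  have g4 : b₂.1 ≤ K := (le_max_right _ _).trans (le_max_right _ _)
  have h1 : tr L g1 a₁.2 ≤ tr L g2 b₁.2 := tr_le_of_le L g1 g2 h
  have e1 : tr L g3 a₂.2 = tr L g1 a₁.2 := (tr_eq_of_eq L g1 g3 ha).symm
  have e2 : tr L g4 b₂.2 = tr L g2 b₁.2 := (tr_eq_of_eq L g2 g4 hb).symm
  have h2 : tr L g3 a₂.2 ≤ tr L g4 b₂.2 := by rw [e1, e2]; exact h1
  exact tr_le_of_le L _ _ h2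

/-- The order on the colimit. -/
def le' : KT L → KT L → Prop :=
  Quotient.lift₂ (fun a b => tr L (le_max_left a.1 b.1) a.2 ≤ tr L (le_max_right a.1 b.1) b.2)
    fun a b a' b' ha hb => propext
      ⟨le_transfer L ha hb, le_transfer L ((sd L).iseqv.symm ha) ((sd L).iseqv.symm hb)⟩

theorem le'_mk {n : ℕ} {x y : T L n} : le' L (mk L n x) (mk L n y) ↔ x ≤ y := by
  show tr L (le_max_left n n) x ≤ tr L (le_max_right n n) y ↔ x ≤ y
  exact tr_le_tr_iff L (le_max_left n n)

def supFn : (Σ n, T L n) → (Σ n, T L n) → (Σ n, T L n) := fun a b =>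
  ⟨max a.1 b.1, tr L (le_max_left a.1 b.1) a.2 ⊔ tr L (le_max_right a.1 b.1) b.2⟩

def infFn : (Σ n, T L n) → (Σ n, T L n) → (Σ n, T L n) := fun a b =>
  ⟨max a.1 b.1, tr L (le_max_left a.1 b.1) a.2 ⊓ tr L (le_max_right a.1 b.1) b.2⟩

theorem supFn_resp (a₁ a₂ : Σ n, T L n) (ha : (sd L).r a₁ a₂) (b₁ b₂ : Σ n, T L n)
    (hb : (sd L).r b₁ b₂) : (sd L).r (supFn L a₁ b₁) (supFn L a₂ b₂) := by
  show tr L (le_max_left (max a₁.1 b₁.1) (max a₂.1 b₂.1)) (tr L _ a₁.2 ⊔ tr L _ b₁.2) =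
    tr L (le_max_right (max a₁.1 b₁.1) (max a₂.1 b₂.1)) (tr L _ a₂.2 ⊔ tr L _ b₂.2)
  rw [tr_sup, tr_sup, ← tr_trans', ← tr_trans', ← tr_trans', ← tr_trans']
  congr 1
  · exact tr_eq_of_eq L _ _ ha
  · exact tr_eq_of_eq L _ _ hb

theorem infFn_resp (a₁ a₂ : Σ n, T L n) (ha : (sd L).r a₁ a₂) (b₁ b₂ : Σ n, T L n)
    (hb : (sd L).r b₁ b₂) : (sd L).r (infFn L a₁ b₁) (infFn L a₂ b₂) := by
  show tr L (le_max_left (max a₁.1 b₁.1) (max a₂.1 b₂.1)) (tr L _ a₁.2 ⊓ tr L _ b₁.2) =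
    tr L (le_max_right (max a₁.1 b₁.1) (max a₂.1 b₂.1)) (tr L _ a₂.2 ⊓ tr L _ b₂.2)
  rw [tr_inf, tr_inf, ← tr_trans', ← tr_trans', ← tr_trans', ← tr_trans']
  congr 1
  · exact tr_eq_of_eq L _ _ ha
  · exact tr_eq_of_eq L _ _ hb

def sup' : KT L → KT L → KT L := Quotient.map₂ (supFn L) (supFn_resp L)
def inf' : KT L → KT L → KT L := Quotient.map₂ (infFn L) (infFn_resp L)

theorem sup'_mk {n : ℕ} (x y : T L n) : sup' L (mk L n x) (mk L n y) = mk L n (x ⊔ y) := by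
  show mk L (max n n) (tr L (le_max_left n n) x ⊔ tr L (le_max_right n n) y) = mk L n (x ⊔ y)
  rw [mk_eq_mk L (le_max_left n n) (x ⊔ y), tr_sup]

theorem inf'_mk {n : ℕ} (x y : T L n) : inf' L (mk L n x) (mk L n y) = mk L n (x ⊓ y) := by
  show mk L (max n n) (tr L (le_max_left n n) x ⊓ tr L (le_max_right n n) y) = mk L n (x ⊓ y)
  rw [mk_eq_mk L (le_max_left n n) (x ⊓ y), tr_inf]

instance instPartialOrderKT : PartialOrder (KT L) where
  le := le' L
  le_refl q := by
    obtain ⟨n, x, rfl⟩ := exists_rep L q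
    exact (le'_mk L).mpr le_rfl
  le_trans q₁ q₂ q₃ h1 h2 := by
    obtain ⟨n, x, y, z, rfl, rfl, rfl⟩ := exists_rep₃ L q₁ q₂ q₃
    exact (le'_mk L).mpr (((le'_mk L).mp h1).trans ((le'_mk L).mp h2))
  le_antisymm q₁ q₂ h1 h2 := by
    obtain ⟨n, x, y, rfl, rfl⟩ := exists_rep₂ L q₁ q₂
    exact congrArg (mk L n) (le_antisymm ((le'_mk L).mp h1) ((le'_mk L).mp h2))

instance instLatticeKT : Lattice (KT L) :=
  { instPartialOrderKT L with
    sup := sup' L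
    le_sup_left := fun q₁ q₂ => by
      obtain ⟨n, x, y, rfl, rfl⟩ := exists_rep₂ L q₁ q₂
      rw [sup'_mk]
      exact (le'_mk L).mpr le_sup_left
    le_sup_right := fun q₁ q₂ => by
      obtain ⟨n, x, y, rfl, rfl⟩ := exists_rep₂ L q₁ q₂
      rw [sup'_mk]
      exact (le'_mk L).mpr le_sup_right
    sup_le := fun q₁ q₂ q₃ h1 h2 => by
      obtain ⟨n, x, y, z, rfl, rfl, rfl⟩ := exists_rep₃ L q₁ q₂ q₃
      rw [sup'_mk]
      exact (le'_mk L).mpr (sup_le ((le'_mk L).mp h1) ((le'_mk L).mp h2))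
    inf := inf' L
    inf_le_left := fun q₁ q₂ => by
      obtain ⟨n, x, y, rfl, rfl⟩ := exists_rep₂ L q₁ q₂
      rw [inf'_mk]
      exact (le'_mk L).mpr inf_le_left
    inf_le_right := fun q₁ q₂ => by
      obtain ⟨n, x, y, rfl, rfl⟩ := exists_rep₂ L q₁ q₂
      rw [inf'_mk]
      exact (le'_mk L).mpr inf_le_right
    le_inf := fun q₁ q₂ q₃ h1 h2 => by
      obtain ⟨n, x, y, z, rfl, rfl, rfl⟩ := exists_rep₃ L q₁ q₂ q₃
      rw [inf'_mk]
      exact (le'_mk L).mpr (le_inf ((le'_mk L).mp h1) ((le'_mk L).mp h2)) }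

theorem mk_sup {n : ℕ} (x y : T L n) : mk L n x ⊔ mk L n y = mk L n (x ⊔ y) := sup'_mk L x y
theorem mk_inf {n : ℕ} (x y : T L n) : mk L n x ⊓ mk L n y = mk L n (x ⊓ y) := inf'_mk L x y
theorem mk_le_mk {n : ℕ} {x y : T L n} : mk L n x ≤ mk L n y ↔ x ≤ y := le'_mk L

/-- The canonical lattice embedding of each level into the colimit. -/
def jHom (n : ℕ) : LatticeHom (T L n) (KT L) where
  toFun := mk L n
  map_sup' x y := (mk_sup L x y).symm
  map_inf' x y := (mk_inf L x y).symm

theorem jHom_injective (n : ℕ) : Function.Injective (jHom L n) := fun _ _ h => mk_inj L h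

theorem jHom_em (n : ℕ) (x : T L n) : jHom L (n + 1) (em L n x) = jHom L n x := by
  show mk L (n + 1) (em L n x) = mk L n x
  rw [mk_eq_mk L (Nat.le_succ n) x]
  rw [tr_succ_self]

end Tower

namespace Tower

variable (L : Type u) [Lattice L]

/-- The tower of congruences extending a congruence `α` of `L`. -/
def conTower (α : LatticeCon' L) : (n : ℕ) → LatticeCon' (T L n)
  | 0 => α
  | n + 1 => (BoolTriple.hat (conTower α n) : LatticeCon' (BoolTriple (T L n)))

theorem conTower_em {α : LatticeCon' L} (n : ℕ) {x y : T L n} :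
    (conTower L α (n + 1)).r (em L n x) (em L n y) ↔ (conTower L α n).r x y :=
  ⟨fun h => h.1, fun h => ⟨h, h, h⟩⟩

theorem conTower_tr {α : LatticeCon' L} {m n : ℕ} (h : m ≤ n) {x y : T L m} :
    (conTower L α n).r (tr L h x) (tr L h y) ↔ (conTower L α m).r x y := by
  induction n, h using Nat.le_induction with
  | base => rw [tr_self, tr_self]
  | succ n h ih =>
    rw [tr_succ_last L h, tr_succ_last L h]
    exact (conTower_em L n).trans ih

def conFn (α : LatticeCon' L) : (Σ n, T L n) → (Σ n, T L n) → Prop := fun a b =>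
  (conTower L α (max a.1 b.1)).r (tr L (le_max_left a.1 b.1) a.2)
    (tr L (le_max_right a.1 b.1) b.2)

theorem con_transfer {α : LatticeCon' L} {a₁ b₁ a₂ b₂ : Σ n, T L n}
    (ha : (sd L).r a₁ a₂) (hb : (sd L).r b₁ b₂) (h : conFn L α a₁ b₁) : conFn L α a₂ b₂ := by
  unfold conFn at h ⊢
  set K := max (max a₁.1 b₁.1) (max a₂.1 b₂.1) with hK
  have g1 : a₁.1 ≤ K := (le_max_left _ _).trans (le_max_left _ _)
  have g2 : b₁.1 ≤ K := (le_max_right _ _).trans (le_max_left _ _)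
  have g3 : a₂.1 ≤ K := (le_max_left _ _).trans (le_max_right _ _)
  have g4 : b₂.1 ≤ K := (le_max_right _ _).trans (le_max_right _ _)
  have hM1K : max a₁.1 b₁.1 ≤ K := le_max_left _ _
  have hM2K : max a₂.1 b₂.1 ≤ K := le_max_right _ _
  have h1 : (conTower L α K).r (tr L g1 a₁.2) (tr L g2 b₁.2) := by
    have := (conTower_tr L hM1K).mpr h
    rwa [← tr_trans' L _ hM1K, ← tr_trans' L _ hM1K] at this
  have e1 : tr L g3 a₂.2 = tr L g1 a₁.2 := (tr_eq_of_eq L g1 g3 ha).symm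
  have e2 : tr L g4 b₂.2 = tr L g2 b₁.2 := (tr_eq_of_eq L g2 g4 hb).symm
  have h2 : (conTower L α K).r (tr L g3 a₂.2) (tr L g4 b₂.2) := by rw [e1, e2]; exact h1
  apply (conTower_tr L hM2K).mp
  rwa [← tr_trans' L _ hM2K, ← tr_trans' L _ hM2K]

/-- The relation on the colimit induced by `α`. -/
def crel (α : LatticeCon' L) : KT L → KT L → Prop :=
  Quotient.lift₂ (conFn L α) fun _ _ a' b' ha hb => propext
    ⟨con_transfer L ha hb, con_transfer L ((sd L).iseqv.symm ha) ((sd L).iseqv.symm hb)⟩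

theorem crel_mk {α : LatticeCon' L} {n : ℕ} {x y : T L n} :
    crel L α (mk L n x) (mk L n y) ↔ (conTower L α n).r x y := by
  show conFn L α ⟨n, x⟩ ⟨n, y⟩ ↔ _
  exact conTower_tr L (le_max_left n n)

/-- The canonical extension of `α` to a congruence of the colimit. -/
def conK (α : LatticeCon' L) : LatticeCon' (KT L) where
  r := crel L α
  iseqv := by
    refine ⟨fun q => ?_, fun {q₁ q₂} h => ?_, fun {q₁ q₂ q₃} h1 h2 => ?_⟩
    · obtain ⟨n, x, rfl⟩ := exists_rep L q
      exact (crel_mk L).mpr ((conTower L α n).r_refl x)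
    · obtain ⟨n, x, y, rfl, rfl⟩ := exists_rep₂ L q₁ q₂
      exact (crel_mk L).mpr ((conTower L α n).r_symm ((crel_mk L).mp h))
    · obtain ⟨n, x, y, z, rfl, rfl, rfl⟩ := exists_rep₃ L q₁ q₂ q₃
      exact (crel_mk L).mpr ((conTower L α n).r_trans ((crel_mk L).mp h1) ((crel_mk L).mp h2))
  sup_comp := by
    intro a b c d h1 h2
    obtain ⟨n, x, y, z, w, rfl, rfl, rfl, rfl⟩ := exists_rep₄ L a b c d
    show crel L α _ _
    rw [mk_sup, mk_sup]
    exact (crel_mk L).mpr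
      ((conTower L α n).sup_comp ((crel_mk L).mp h1) ((crel_mk L).mp h2))
  inf_comp := by
    intro a b c d h1 h2
    obtain ⟨n, x, y, z, w, rfl, rfl, rfl, rfl⟩ := exists_rep₄ L a b c d
    show crel L α _ _
    rw [mk_inf, mk_inf]
    exact (crel_mk L).mpr
      ((conTower L α n).inf_comp ((crel_mk L).mp h1) ((crel_mk L).mp h2))

theorem restrict_conK (α : LatticeCon' L) :
    LatticeCon'.restrict (jHom L 0) (conK L α) = α := by
  apply LatticeCon'.ext'
  intro a b
  exact (crel_mk L (n := 0))

theorem conK_unique (α : LatticeCon' L) (Θ : LatticeCon' (KT L))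
    (hΘ : LatticeCon'.restrict (jHom L 0) Θ = α) : Θ = conK L α := by
  have key : ∀ n, LatticeCon'.restrict (jHom L n) Θ = conTower L α n := by
    intro n
    induction n with
    | zero => exact hΘ
    | succ n ih =>
      have hres : LatticeCon'.restrict
          (BoolTriple.diag : LatticeHom (T L n) (BoolTriple (T L n)))
          (LatticeCon'.restrict (jHom L (n + 1)) Θ) = conTower L α n := by
        rw [← ih]
        apply LatticeCon'.ext'
        intro a b
        show Θ.r (jHom L (n + 1) (em L n a)) (jHom L (n + 1) (em L n b)) ↔
          Θ.r (jHom L n a) (jHom L n b)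
        rw [jHom_em, jHom_em]
      obtain ⟨W, hW, huniq⟩ := BoolTriple.conPreserving (conTower L α n)
      have e1 : LatticeCon'.restrict (jHom L (n + 1)) Θ = W := huniq _ hres
      have e2 : conTower L α (n + 1) = W := huniq _ (BoolTriple.restrict_hat _)
      exact e1.trans e2.symm
  apply LatticeCon'.ext'
  intro q₁ q₂
  obtain ⟨n, x, y, h1, h2⟩ := exists_rep₂ L q₁ q₂
  rw [h1, h2]
  have hk : (LatticeCon'.restrict (jHom L n) Θ).r x y ↔ (conTower L α n).r x y := by
    rw [key n]
  exact ⟨fun h => (crel_mk L).mpr (hk.mp h), fun h => hk.mpr ((crel_mk L).mp h)⟩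

end Tower

namespace Tower

variable (L : Type u) [Lattice L]

theorem mk_em (n : ℕ) (x : T L n) : mk L (n + 1) (em L n x) = mk L n x := jHom_em L n x

theorem gadget_r_iff (n : ℕ) (a b c d : T L n) (Θ : LatticeCon' (KT L)) :
    Θ.r (mk L (n + 1) (BoolTriple.gU a b c d)) (mk L (n + 1) (BoolTriple.gV a b c d)) ↔
      Θ.r (mk L n a) (mk L n b) ∧ Θ.r (mk L n c) (mk L n d) := by
  have h := BoolTriple.gadget_iff (LatticeCon'.restrict (jHom L (n + 1)) Θ) a b c d
  have h' : Θ.r (mk L (n + 1) (BoolTriple.gU a b c d)) (mk L (n + 1) (BoolTriple.gV a b c d)) ↔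
      Θ.r (mk L (n + 1) (em L n a)) (mk L (n + 1) (em L n b)) ∧
        Θ.r (mk L (n + 1) (em L n c)) (mk L (n + 1) (em L n d)) := h
  rwa [mk_em, mk_em, mk_em, mk_em] at h'

theorem conPair_gadget (n : ℕ) (a b c d : T L n) :
    LatticeCon'.conPair (mk L (n + 1) (BoolTriple.gU a b c d))
        (mk L (n + 1) (BoolTriple.gV a b c d)) =
      LatticeCon'.conPair (mk L n a) (mk L n b) ⊔ LatticeCon'.conPair (mk L n c) (mk L n d) := by
  apply le_antisymm
  · apply LatticeCon'.conPair_le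
    refine (gadget_r_iff L n a b c d _).mpr ⟨?_, ?_⟩
    · exact LatticeCon'.le_r le_sup_left (LatticeCon'.conPair_r _ _)
    · exact LatticeCon'.le_r le_sup_right (LatticeCon'.conPair_r _ _)
  · refine sup_le (LatticeCon'.conPair_le ?_) (LatticeCon'.conPair_le ?_)
    · exact ((gadget_r_iff L n a b c d _).mp (LatticeCon'.conPair_r _ _)).1
    · exact ((gadget_r_iff L n a b c d _).mp (LatticeCon'.conPair_r _ _)).2

/-- In the colimit, the join of two principal congruences is principal. -/
theorem isPrincipal_sup {γ δ : LatticeCon' (KT L)} (hγ : γ.IsPrincipal)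
    (hδ : δ.IsPrincipal) : (γ ⊔ δ).IsPrincipal := by
  obtain ⟨a, b, rfl⟩ := hγ.eq_conPair
  obtain ⟨c, d, rfl⟩ := hδ.eq_conPair
  obtain ⟨n, x, y, z, w, rfl, rfl, rfl, rfl⟩ := exists_rep₄ L a b c d
  rw [← conPair_gadget]
  exact LatticeCon'.isPrincipal_conPair _ _

end Tower

/-- **Theorem (Grätzer–Schmidt).** Every lattice `L` has a congruence-preserving
extension `K` (i.e. `L` is a sublattice of `K` and every congruence of `L` extends to
exactly one congruence of `K`) in which every compact congruence is principal:
`Princ K = Conc K`. -/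
theorem congruence_preserving_extension_with_principal_eq_compact
    (L : Type u) [Lattice L] :
    ∃ (K : Type u) (_ : Lattice K) (f : LatticeHom L K),
      Function.Injective f ∧
      (∀ α : LatticeCon' L, ∃! γ : LatticeCon' K, LatticeCon'.restrict f γ = α) ∧
      {γ : LatticeCon' K | γ.IsPrincipal} =
        {γ : LatticeCon' K | IsCompactElement γ} := by
  rcases isEmpty_or_nonempty L with hL | hL
  · -- degenerate case: `L` is empty
    have huniq : ∀ γ δ : LatticeCon' PUnit.{u + 1}, γ = δ := fun γ δ =>
      LatticeCon'.ext' fun a b => by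
        cases a; cases b; exact iff_of_true (γ.r_refl _) (δ.r_refl _)
    refine ⟨PUnit.{u + 1}, inferInstance,
      ⟨⟨fun _ => PUnit.unit, fun _ _ => Subsingleton.elim _ _⟩,
        fun _ _ => Subsingleton.elim _ _⟩, ?_, ?_, ?_⟩
    · intro a
      exact isEmptyElim a
    · intro α
      refine ⟨sInf ∅, ?_, fun γ _ => huniq γ _⟩
      exact LatticeCon'.ext' fun a b => isEmptyElim a
    · ext γ
      simp only [Set.mem_setOf_eq]
      apply iff_of_true
      · refine ⟨PUnit.unit, PUnit.unit, γ.r_refl _, fun β _ => ?_⟩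
        intro a b _
        cases a; cases b
        exact β.r_refl _
      · rw [CompleteLattice.isCompactElement_iff_exists_le_sSup_of_le_sSup]
        intro S hS
        refine ⟨∅, by simp, ?_⟩
        rw [Finset.sup_empty]
        exact (huniq γ ⊥).le
  · -- main case: the direct limit of the `M₃⟨-⟩` tower over `L`
    obtain ⟨x0⟩ := hL
    haveI : Nonempty (Tower.KT L) := ⟨Tower.mk L 0 x0⟩
    refine ⟨Tower.KT L, inferInstance, Tower.jHom L 0, Tower.jHom_injective L 0, ?_, ?_⟩
    · intro α
      exact ⟨Tower.conK L α, Tower.restrict_conK L α, fun Θ hΘ => Tower.conK_unique L α Θ hΘ⟩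
    · ext γ
      simp only [Set.mem_setOf_eq]
      constructor
      · exact fun h => h.isCompactElement
      · intro h
        classical
        obtain ⟨Tf, hprin, rfl⟩ := LatticeCon'.isCompact_eq_finsetSup h
        have main : ∀ s : Finset (LatticeCon' (Tower.KT L)),
            (∀ β ∈ s, β.IsPrincipal) → (s.sup id).IsPrincipal := by
          intro s
          induction s using Finset.induction_on with
          | empty =>
            intro _
            rw [Finset.sup_empty]
            exact LatticeCon'.isPrincipal_bot
          | insert _ _ hβs ih =>
            intro hs
            rw [Finset.sup_insert]
            exact Tower.isPrincipal_sup L (hs _ (Finset.mem_insert_self _ _))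
              (ih fun β hβ => hs β (Finset.mem_insert_of_mem hβ))
        exact main Tf hprin
end

section
/- Let K be a bounded lattice with bounds o and i such that every element x with o < x < i is contained in a sublattice A of K containing o and i with A isomorphic to the five-element modular nondistributive lattice M3. Then every congruence α of K that is distinct from the zero congruence and is not {o,i}-isolating (that is, α collapses o or i with some other element of K) equals the full congruence on K. -/
universe u v

/-- A congruence of a lattice: an equivalence relation compatible with join and meet. -/
structure LatticeCongr (L : Type u) [Lattice L] extends Setoid L where
  sup_comp : ∀ {a b c d : L}, r a b → r c d → r (a ⊔ c) (b ⊔ d)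
  inf_comp : ∀ {a b c d : L}, r a b → r c d → r (a ⊓ c) (b ⊓ d)

namespace LatticeCongr

variable {L : Type u} [Lattice L]

theorem ext' {c d : LatticeCongr L} (h : ∀ a b, c.r a b ↔ d.r a b) : c = d := by
  obtain ⟨cs, _, _⟩ := c
  obtain ⟨ds, _, _⟩ := d
  congr 1
  exact Setoid.ext h

/-- Congruences are ordered by inclusion of the underlying relations. -/
instance : PartialOrder (LatticeCongr L) where
  le c d := ∀ ⦃a b : L⦄, c.r a b → d.r a b
  le_refl c a b h := h
  le_trans c d e h1 h2 a b h := h2 (h1 h)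
  le_antisymm c d h1 h2 := ext' fun a b => ⟨fun h => h1 h, fun h => h2 h⟩

instance : InfSet (LatticeCongr L) where
  sInf S :=
    { r := fun a b => ∀ c ∈ S, c.r a b
      iseqv := ⟨fun a c _ => c.iseqv.refl a,
        fun h c hc => c.iseqv.symm (h c hc),
        fun h1 h2 c hc => c.iseqv.trans (h1 c hc) (h2 c hc)⟩
      sup_comp := fun h1 h2 c hc => c.sup_comp (h1 c hc) (h2 c hc)
      inf_comp := fun h1 h2 c hc => c.inf_comp (h1 c hc) (h2 c hc) }

/-- The congruence lattice `Con L`. -/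
instance : CompleteLattice (LatticeCongr L) :=
  completeLatticeOfInf _ fun S =>
    ⟨fun c hc _ _ h => h c hc, fun c hc _ _ h d hd => hc hd h⟩

/-- A congruence is principal if it is the smallest congruence collapsing some pair. -/
def IsPrincipal (α : LatticeCongr L) : Prop :=
  ∃ a b : L, α.r a b ∧ ∀ β : LatticeCongr L, β.r a b → α ≤ β

/-- `Princ L`: the order of principal congruences of `L`. -/
abbrev Princ (L : Type u) [Lattice L] := {α : LatticeCongr L // α.IsPrincipal}

/-- `Conc L`: the compact congruences of `L`. -/
abbrev Conc (L : Type u) [Lattice L] := {α : LatticeCongr L //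
  ∀ s : Set (LatticeCongr L), α ≤ sSup s → ∃ t : Finset (LatticeCongr L), ↑t ⊆ s ∧ α ≤ t.sup id}

end LatticeCongr

/-- The five-element modular nondistributive lattice `M₃` (the diamond): bottom, top and
three pairwise incomparable atoms. -/
inductive M3 : Type
  | bot | a | b | c | top
  deriving DecidableEq

instance : Fintype M3 :=
  ⟨{M3.bot, M3.a, M3.b, M3.c, M3.top}, fun x => by cases x <;> decide⟩

namespace M3

/-- The order of `M₃`. -/
def leB : M3 → M3 → Bool
  | bot, _ => true
  | _, top => true
  | x, y => x == y

instance : LE M3 := ⟨fun x y => leB x y = true⟩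

instance : DecidableRel ((· ≤ ·) : M3 → M3 → Prop) := fun x y => inferInstanceAs (Decidable (leB x y = true))

/-- Join in `M₃`. -/
def supFn : M3 → M3 → M3 := fun x y =>
  if leB x y then y else if leB y x then x else top

/-- Meet in `M₃`. -/
def infFn : M3 → M3 → M3 := fun x y =>
  if leB x y then x else if leB y x then y else bot

instance : Lattice M3 where
  le := (· ≤ ·)
  le_refl := by decide
  le_trans := by decide
  le_antisymm := by decide
  sup := supFn
  le_sup_left := by decide
  le_sup_right := by decide
  sup_le := by decide
  inf := infFn
  inf_le_left := by decide
  inf_le_right := by decide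
  le_inf := by decide

end M3

section Proof

variable {K : Type u} [Lattice K] [BoundedOrder K]

private lemma M3key : ∀ m : M3, m ≠ M3.bot → m ≠ M3.top →
    ∃ m₁ m₂ : M3, m ⊔ m₁ = M3.top ∧ m₁ ⊓ m₂ = M3.bot ∧ m ⊔ m₂ = M3.top ∧
      m ⊓ m₁ = M3.bot ∧ m₁ ≠ M3.bot ∧ m₁ ≠ M3.top := by decide

private lemma aux_bot_top
    (hM3 : ∀ x : K, ⊥ < x → x < ⊤ →
      ∃ A : Sublattice K, (⊥ : K) ∈ A ∧ (⊤ : K) ∈ A ∧ x ∈ A ∧ Nonempty (A ≃o M3))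
    (α : LatticeCongr K) {x : K} (hx : α.r ⊥ x) (h1 : (⊥ : K) < x) (h2 : x < ⊤) :
    α.r (⊥ : K) (⊤ : K) := by
  obtain ⟨A, hb, ht, hxA, ⟨e⟩⟩ := hM3 x h1 h2
  set o' : A := ⟨⊥, hb⟩
  set i' : A := ⟨⊤, ht⟩
  set x' : A := ⟨x, hxA⟩
  have heo : e o' = M3.bot := by
    have h : ∀ m : M3, e o' ≤ m := by
      intro m
      have : e o' ≤ e (e.symm m) := by
        rw [e.le_iff_le]
        exact Subtype.coe_le_coe.mp bot_le
      simpa using this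
    have h2 : ∀ m : M3, M3.bot ≤ m := by decide
    exact le_antisymm (h M3.bot) (h2 _)
  have hei : e i' = M3.top := by
    have h : ∀ m : M3, m ≤ e i' := by
      intro m
      have : e (e.symm m) ≤ e i' := by
        rw [e.le_iff_le]
        exact Subtype.coe_le_coe.mp le_top
      simpa using this
    have h2 : ∀ m : M3, m ≤ M3.top := by decide
    exact le_antisymm (h2 _) (h M3.top)
  have hx'b : e x' ≠ M3.bot := by
    rw [← heo]
    intro h
    exact h1.ne' (congrArg Subtype.val (e.injective h))
  have hx't : e x' ≠ M3.top := by
    rw [← hei]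
    intro h
    exact h2.ne (congrArg Subtype.val (e.injective h))
  obtain ⟨m₁, m₂, hs1, hi12, hs2, _, _, _⟩ := M3key (e x') hx'b hx't
  set y : K := (e.symm m₁ : K)
  set z : K := (e.symm m₂ : K)
  have hxy : x ⊔ y = ⊤ := by
    have : x' ⊔ e.symm m₁ = i' := by
      apply e.injective
      rw [e.map_sup, e.apply_symm_apply, hs1, hei]
    exact congrArg Subtype.val this
  have hyz : y ⊓ z = ⊥ := by
    have : e.symm m₁ ⊓ e.symm m₂ = o' := by
      apply e.injective
      rw [e.map_inf, e.apply_symm_apply, e.apply_symm_apply, hi12, heo]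
    exact congrArg Subtype.val this
  have hxz : x ⊔ z = ⊤ := by
    have : x' ⊔ e.symm m₂ = i' := by
      apply e.injective
      rw [e.map_sup, e.apply_symm_apply, hs2, hei]
    exact congrArg Subtype.val this
  have hy : α.r y (⊤ : K) := by
    have := α.sup_comp (α.iseqv.refl y) hx
    rwa [sup_bot_eq, sup_comm, hxy] at this
  have hz : α.r (⊥ : K) z := by
    have := α.inf_comp hy (α.iseqv.refl z)
    rwa [hyz, top_inf_eq] at this
  have := α.sup_comp hx hz
  rwa [bot_sup_eq, hxz] at this

end Proof

/-- **Lemma.** Let `K` be a bounded lattice (bounds `o = ⊥`, `i = ⊤`) such that every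
element strictly between the bounds lies in a `{o,i}`-sublattice of `K` isomorphic
to `M₃`. Then every nonzero congruence `α` of `K` that is not `{o,i}`-isolating
(i.e. `α` collapses `o` or `i` with some other element) is the full congruence. -/
theorem non_isolating_congruence_is_full
    (K : Type u) [Lattice K] [BoundedOrder K]
    (hM3 : ∀ x : K, ⊥ < x → x < ⊤ →
      ∃ A : Sublattice K, (⊥ : K) ∈ A ∧ (⊤ : K) ∈ A ∧ x ∈ A ∧ Nonempty (A ≃o M3))
    (α : LatticeCongr K) (hne : α ≠ ⊥)
    (hcol : (∃ x : K, x ≠ ⊥ ∧ α.r (⊥ : K) x) ∨ (∃ x : K, x ≠ ⊤ ∧ α.r (⊤ : K) x)) :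
    α = ⊤ := by
  have key : α.r (⊥ : K) (⊤ : K) := by
    rcases hcol with ⟨x, hx0, hr⟩ | ⟨x, hxt, hr⟩
    · by_cases hxt : x = ⊤
      · rwa [hxt] at hr
      · exact aux_bot_top hM3 α hr (bot_lt_iff_ne_bot.2 hx0) (lt_top_iff_ne_top.2 hxt)
    · by_cases hx0 : x = ⊥
      · rw [hx0] at hr; exact α.iseqv.symm hr
      · obtain ⟨A, hb, ht, hxA, ⟨e⟩⟩ := hM3 x (bot_lt_iff_ne_bot.2 hx0) (lt_top_iff_ne_top.2 hxt)
        set o' : A := ⟨⊥, hb⟩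
        set i' : A := ⟨⊤, ht⟩
        set x' : A := ⟨x, hxA⟩
        have heo : e o' = M3.bot := by
          have h : ∀ m : M3, e o' ≤ m := by
            intro m
            have : e o' ≤ e (e.symm m) := by
              rw [e.le_iff_le]
              exact Subtype.coe_le_coe.mp bot_le
            simpa using this
          have h2 : ∀ m : M3, M3.bot ≤ m := by decide
          exact le_antisymm (h M3.bot) (h2 _)
        have hei : e i' = M3.top := by
          have h : ∀ m : M3, m ≤ e i' := by
            intro m
            have : e (e.symm m) ≤ e i' := by
              rw [e.le_iff_le]
              exact Subtype.coe_le_coe.mp le_top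
            simpa using this
          have h2 : ∀ m : M3, m ≤ M3.top := by decide
          exact le_antisymm (h2 _) (h M3.top)
        have hx'b : e x' ≠ M3.bot := by
          rw [← heo]
          intro h
          exact hx0 (congrArg Subtype.val (e.injective h))
        have hx't : e x' ≠ M3.top := by
          rw [← hei]
          intro h
          exact hxt (congrArg Subtype.val (e.injective h))
        obtain ⟨m₁, m₂, _, _, _, hixy, hm1b, hm1t⟩ := M3key (e x') hx'b hx't
        set y : K := (e.symm m₁ : K)
        have hxy : x ⊓ y = ⊥ := by
          have : x' ⊓ e.symm m₁ = o' := by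
            apply e.injective
            rw [e.map_inf, e.apply_symm_apply, hixy, heo]
          exact congrArg Subtype.val this
        have hy0 : α.r (⊥ : K) y := by
          have := α.inf_comp hr (α.iseqv.refl y)
          rw [top_inf_eq, hxy] at this
          exact α.iseqv.symm this
        have hyb : (⊥ : K) < y := by
          refine bot_lt_iff_ne_bot.2 fun h => hm1b ?_
          rw [← heo, ← e.apply_symm_apply m₁]
          exact congrArg e (Subtype.ext h)
        have hyt : y < ⊤ := by
          refine lt_top_iff_ne_top.2 fun h => hm1t ?_
          rw [← hei, ← e.apply_symm_apply m₁]
          exact congrArg e (Subtype.ext h)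
        exact aux_bot_top hM3 α hy0 hyb hyt
  have hall : ∀ a b : K, α.r a b := by
    intro a b
    have ha : α.r a (⊤ : K) := by
      have := α.sup_comp (α.iseqv.refl a) key
      rwa [sup_bot_eq, sup_top_eq] at this
    have hb : α.r b (⊤ : K) := by
      have := α.sup_comp (α.iseqv.refl b) key
      rwa [sup_bot_eq, sup_top_eq] at this
    exact α.iseqv.trans ha (α.iseqv.symm hb)
  exact le_antisymm le_top fun a b _ => hall a b
end
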